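/- Let n ≥ 4. An n²×n² real matrix W commutes with G ⊗ G for every n×n permutation matrix G if and only if W, viewed as a function of index pairs ((i,j),(k,l)) ∈ ([n]×[n])², is constant on equality-pattern classes of the 4-tuple (i,j,k,l); consequently the dimension of this commutant is the 4th Bell number, 15. -/
import Mathlib


open Matrix Kronecker

/-- Two 4-tuples have the same equality pattern iff equalities among their
coordinates occur at the same positions. -/
def samePattern4 {n : ℕ} (t s : Fin 4 → Fin n) : Prop :=
  ∀ a b : Fin 4, t a = t b ↔ s a = s b

/-- The space of n²×n² real matrices commuting with `G ⊗ G` for every n×n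
permutation matrix `G`. -/
def diagKronCommutant (n : ℕ) :
    Submodule ℝ (Matrix (Fin n × Fin n) (Fin n × Fin n) ℝ) where
  carrier := {W | ∀ σ : Equiv.Perm (Fin n),
    W * ((σ.permMatrix ℝ) ⊗ₖ (σ.permMatrix ℝ)) =
      ((σ.permMatrix ℝ) ⊗ₖ (σ.permMatrix ℝ)) * W}
  add_mem' := by
    intro W V hW hV σ
    rw [add_mul, mul_add, hW σ, hV σ]
  zero_mem' := by intro σ; rw [zero_mul, mul_zero]
  smul_mem' := by
    intro c W hW σ
    rw [smul_mul_assoc, mul_smul_comm, hW σ]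

/-- index of first occurrence of the value `t a` in the tuple `t`. -/
def firstIdx4 {n : ℕ} (t : Fin 4 → Fin n) (a : Fin 4) : Fin 4 :=
  if t 0 = t a then 0 else if t 1 = t a then 1 else if t 2 = t a then 2 else 3

lemma apply_firstIdx4 {n : ℕ} (t : Fin 4 → Fin n) (a : Fin 4) :
    t (firstIdx4 t a) = t a := by
  unfold firstIdx4
  split_ifs with h1 h2 h3
  · exact h1
  · exact h2
  · exact h3
  · fin_cases a <;> first | rfl | tauto

lemma firstIdx4_eq_iff {n : ℕ} (t : Fin 4 → Fin n) (a b : Fin 4) :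
    firstIdx4 t a = firstIdx4 t b ↔ t a = t b := by
  constructor
  · intro h
    rw [← apply_firstIdx4 t a, ← apply_firstIdx4 t b, h]
  · intro h
    unfold firstIdx4
    rw [h]

lemma firstIdx4_congr {n m : ℕ} {t : Fin 4 → Fin n} {s : Fin 4 → Fin m}
    (h : ∀ a b : Fin 4, t a = t b ↔ s a = s b) : firstIdx4 t = firstIdx4 s := by
  funext a
  unfold firstIdx4
  simp only [h 0 a, h 1 a, h 2 a]

lemma firstIdx4_idem {n : ℕ} (t : Fin 4 → Fin n) :
    firstIdx4 (firstIdx4 t) = firstIdx4 t :=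
  firstIdx4_congr (fun a b => (firstIdx4_eq_iff t a b).symm) |>.symm

/-- Extend a same-pattern correspondence to a permutation. -/
lemma exists_perm_of_samePattern {n : ℕ} {t s : Fin 4 → Fin n} (h : samePattern4 t s) :
    ∃ σ : Equiv.Perm (Fin n), ∀ a, σ (t a) = s a := by
  classical
  set p : Fin n → Prop := fun x => ∃ a, t a = x with hp
  set q : Fin n → Prop := fun x => ∃ a, s a = x with hq
  let F : {x // p x} → {x // q x} := fun x => ⟨s x.2.choose, x.2.choose, rfl⟩
  have hF : ∀ (x : {x // p x}), (F x).1 = s x.2.choose := fun _ => rfl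
  have hbij : Function.Bijective F := by
    constructor
    · rintro ⟨x, hx⟩ ⟨y, hy⟩ hxy
      have : s hx.choose = s hy.choose := congrArg Subtype.val hxy
      have ht : t hx.choose = t hy.choose := (h _ _).2 this
      apply Subtype.ext
      show x = y
      rw [← hx.choose_spec, ← hy.choose_spec, ht]
    · rintro ⟨y, a, ha⟩
      refine ⟨⟨t a, a, rfl⟩, Subtype.ext ?_⟩
      have hc : t (⟨t a, a, rfl⟩ : {x // p x}).2.choose = t a :=
        (⟨t a, a, rfl⟩ : {x // p x}).2.choose_spec
      rw [hF, (h _ _).1 hc, ha]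
  set e := Equiv.ofBijective F hbij
  refine ⟨e.extendSubtype, fun a => ?_⟩
  have hmem : p (t a) := ⟨a, rfl⟩
  rw [e.extendSubtype_apply_of_mem (t a) hmem]
  have hc : t (⟨t a, hmem⟩ : {x // p x}).2.choose = t a :=
    (⟨t a, hmem⟩ : {x // p x}).2.choose_spec
  show (F ⟨t a, hmem⟩).1 = s a
  rw [hF, (h _ _).1 hc]

lemma kron_perm_eq {n : ℕ} (σ : Equiv.Perm (Fin n)) :
    ((σ.permMatrix ℝ) ⊗ₖ (σ.permMatrix ℝ)) = (Equiv.Perm.permMatrix ℝ (Equiv.prodCongr σ σ)) := by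
  ext ⟨i,j⟩ ⟨k,l⟩
  simp only [Matrix.kroneckerMap_apply, PEquiv.toMatrix_apply, Equiv.toPEquiv_apply,
    Option.mem_def, Option.some.injEq, Equiv.prodCongr_apply, Prod.map, Prod.mk.injEq]
  by_cases h1 : σ i = k <;> by_cases h2 : σ j = l <;> simp [h1, h2]

lemma commute_iff_perm_invariant {n : ℕ} (W : Matrix (Fin n × Fin n) (Fin n × Fin n) ℝ) :
    (∀ σ : Equiv.Perm (Fin n),
        W * ((σ.permMatrix ℝ) ⊗ₖ (σ.permMatrix ℝ)) =
          ((σ.permMatrix ℝ) ⊗ₖ (σ.permMatrix ℝ)) * W) ↔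
      ∀ (σ : Equiv.Perm (Fin n)) (i j k l : Fin n),
        W (σ i, σ j) (σ k, σ l) = W (i, j) (k, l) := by
  constructor
  · intro hc σ i j k l
    have h := hc σ
    rw [kron_perm_eq, PEquiv.mul_toMatrix_toPEquiv, PEquiv.toMatrix_toPEquiv_mul] at h
    have h2 := congrFun (congrFun h (i, j)) ((Equiv.prodCongr σ σ) (k, l))
    simpa using h2.symm
  · intro hi σ
    rw [kron_perm_eq, PEquiv.mul_toMatrix_toPEquiv, PEquiv.toMatrix_toPEquiv_mul]
    ext ⟨i, j⟩ ⟨k, l⟩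
    simp only [Matrix.submatrix_apply, id, Equiv.prodCongr_apply, Prod.map,
      Equiv.prodCongr_symm, Equiv.symm_apply_apply]
    have := hi σ i j (σ.symm k) (σ.symm l)
    simpa using this.symm

lemma mem_commutant_iff_pattern {n : ℕ} (W : Matrix (Fin n × Fin n) (Fin n × Fin n) ℝ) :
    (∀ σ : Equiv.Perm (Fin n),
        W * ((σ.permMatrix ℝ) ⊗ₖ (σ.permMatrix ℝ)) =
          ((σ.permMatrix ℝ) ⊗ₖ (σ.permMatrix ℝ)) * W) ↔
      (∀ i j k l i' j' k' l' : Fin n,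
        samePattern4 ![i, j, k, l] ![i', j', k', l'] →
          W (i, j) (k, l) = W (i', j') (k', l')) := by
  rw [commute_iff_perm_invariant]
  constructor
  · intro hi i j k l i' j' k' l' hpat
    obtain ⟨σ, hσ⟩ := exists_perm_of_samePattern hpat
    have h0 := hσ 0; have h1 := hσ 1; have h2 := hσ 2; have h3 := hσ 3
    simp only [Matrix.cons_val_zero, Matrix.cons_val_one, Matrix.head_cons,
      Matrix.cons_val_two, Matrix.tail_cons, Matrix.cons_val_three, Matrix.head_fin_const] at h0 h1 h2 h3
    rw [← h0, ← h1, ← h2, ← h3]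
    exact (hi σ i j k l).symm
  · intro hp σ i j k l
    apply hp
    intro a b
    fin_cases a <;> fin_cases b <;>
      simp [Matrix.cons_val_zero, Matrix.cons_val_one, Matrix.head_cons, σ.injective.eq_iff]


abbrev Canon4 := {f : Fin 4 → Fin 4 // firstIdx4 f = f}

lemma card_canon4 : Fintype.card Canon4 = 15 := by decide

lemma finrank_commutant {n : ℕ} (hn : 4 ≤ n) :
    Module.finrank ℝ (diagKronCommutant n) = 15 := by
  classical
  let e : Fin 4 → Fin n := Fin.castLE hn
  have he : Function.Injective e := Fin.castLE_injective hn
  let Φ : diagKronCommutant n →ₗ[ℝ] (Canon4 → ℝ) :=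
    { toFun := fun W c => W.1 (e (c.1 0), e (c.1 1)) (e (c.1 2), e (c.1 3))
      map_add' := fun W V => rfl
      map_smul' := fun r W => rfl }
  have hΨmem : ∀ v : Canon4 → ℝ,
      (Matrix.of fun (p q : Fin n × Fin n) =>
        v ⟨firstIdx4 ![p.1, p.2, q.1, q.2], firstIdx4_idem _⟩) ∈ diagKronCommutant n := by
    intro v
    have : ∀ σ : Equiv.Perm (Fin n),
        (Matrix.of fun (p q : Fin n × Fin n) =>
          v ⟨firstIdx4 ![p.1, p.2, q.1, q.2], firstIdx4_idem _⟩)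
          * ((σ.permMatrix ℝ) ⊗ₖ (σ.permMatrix ℝ)) =
        ((σ.permMatrix ℝ) ⊗ₖ (σ.permMatrix ℝ))
          * (Matrix.of fun (p q : Fin n × Fin n) =>
            v ⟨firstIdx4 ![p.1, p.2, q.1, q.2], firstIdx4_idem _⟩) := by
      rw [mem_commutant_iff_pattern]
      intro i j k l i' j' k' l' hpat
      show v ⟨firstIdx4 ![i, j, k, l], _⟩ = v ⟨firstIdx4 ![i', j', k', l'], _⟩
      exact congrArg v (Subtype.ext (firstIdx4_congr hpat))
    exact this
  let Ψ : (Canon4 → ℝ) →ₗ[ℝ] diagKronCommutant n :=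
    { toFun := fun v => ⟨Matrix.of fun (p q : Fin n × Fin n) =>
        v ⟨firstIdx4 ![p.1, p.2, q.1, q.2], firstIdx4_idem _⟩, hΨmem v⟩
      map_add' := fun v w => rfl
      map_smul' := fun r v => rfl }
  have h1 : ∀ v, Φ (Ψ v) = v := by
    intro v
    funext c
    show v ⟨firstIdx4 ![e (c.1 0), e (c.1 1), e (c.1 2), e (c.1 3)], _⟩ = v c
    refine congrArg v (Subtype.ext ?_)
    show firstIdx4 ![e (c.1 0), e (c.1 1), e (c.1 2), e (c.1 3)] = c.1
    have : firstIdx4 ![e (c.1 0), e (c.1 1), e (c.1 2), e (c.1 3)] = firstIdx4 c.1 :=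
      firstIdx4_congr (fun a b => by fin_cases a <;> fin_cases b <;> simp [he.eq_iff])
    rw [this, c.2]
  have h2 : ∀ W, Ψ (Φ W) = W := by
    intro W
    refine Subtype.ext ?_
    ext ⟨i, j⟩ ⟨k, l⟩
    show W.1 (e (firstIdx4 ![i,j,k,l] 0), e (firstIdx4 ![i,j,k,l] 1))
        (e (firstIdx4 ![i,j,k,l] 2), e (firstIdx4 ![i,j,k,l] 3)) = W.1 (i, j) (k, l)
    have hW := (mem_commutant_iff_pattern W.1).1 W.2
    apply hW
    intro a b
    have hev : ∀ a : Fin 4,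
        (![e (firstIdx4 ![i,j,k,l] 0), e (firstIdx4 ![i,j,k,l] 1),
           e (firstIdx4 ![i,j,k,l] 2), e (firstIdx4 ![i,j,k,l] 3)] : Fin 4 → Fin n) a
          = e (firstIdx4 ![i,j,k,l] a) := by
      intro a; fin_cases a <;> rfl
    rw [hev a, hev b, he.eq_iff, firstIdx4_eq_iff]
  have equiv : diagKronCommutant n ≃ₗ[ℝ] (Canon4 → ℝ) :=
    LinearEquiv.ofLinear Φ Ψ (LinearMap.ext h1) (LinearMap.ext h2)
  rw [equiv.finrank_eq, Module.finrank_pi, card_canon4]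

theorem diag_kron_commutant_iff_pattern_and_dim {n : ℕ} (hn : 4 ≤ n)
    (W : Matrix (Fin n × Fin n) (Fin n × Fin n) ℝ) :
    ((∀ σ : Equiv.Perm (Fin n),
        W * ((σ.permMatrix ℝ) ⊗ₖ (σ.permMatrix ℝ)) =
          ((σ.permMatrix ℝ) ⊗ₖ (σ.permMatrix ℝ)) * W) ↔
      (∀ i j k l i' j' k' l' : Fin n,
        samePattern4 ![i, j, k, l] ![i', j', k', l'] →
          W (i, j) (k, l) = W (i', j') (k', l'))) ∧
    Module.finrank ℝ (diagKronCommutant n) = 15 :=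
  ⟨mem_commutant_iff_pattern W, finrank_commutant hn⟩
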